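/- Let a, b, c > 0, 2 < q < 10/3, 14/3 < p ≤ 6, let C_p, C_q > 0 be positive parameters, and suppose 0 < μ < min{μ_*, μ*}. Let A, P, Q > 0 satisfy the Gagliardo–Nirenberg-type bounds Q ≤ C_q^q c^{q(1−δ_q)} A^{qδ_q/2} and P ≤ C_p^p c^{p(1−δ_p)} A^{pδ_p/2}, and define the fiber map Ψ(s) = (a/2) e^{2s} A + (b/4) e^{4s} A² − (μ/q) e^{qδ_q s} Q − (1/p) e^{pδ_p s} P for s ∈ ℝ. Then Ψ has exactly two critical points s₀ < t₀ and exactly two zeros c₀ < d₀, and these satisfy s₀ < c₀ < t₀ < d₀; moreover Ψ(s₀) < 0 and s₀ is a local minimum point of Ψ, Ψ(t₀) = max_{s∈ℝ} Ψ(s) > 0, and Ψ is strictly decreasing on (t₀, +∞). -/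

import Mathlib

open Real

/-- Lemma 3.4 of the paper: for `0 < μ < min{μ_*, μ*}` and a fiber map
`Ψ(s) = (a/2) e^{2s} A + (b/4) e^{4s} A² − (μ/q) e^{qδ_q s} Q − (1/p) e^{pδ_p s} P`
built from quantities `A, P, Q > 0` satisfying the Gagliardo–Nirenberg-type bounds,
`Ψ` has exactly two critical points `s₀ < t₀` and exactly two zeros `c₀ < d₀`, with
`s₀ < c₀ < t₀ < d₀`; `Ψ(s₀) < 0`, `s₀` is a local minimum point, `Ψ(t₀)` is the global
maximum and is positive, and `Ψ` is strictly decreasing on `(t₀, ∞)`. -/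
lemma exp_hasDerivAt (γ s : ℝ) : HasDerivAt (fun t => Real.exp (γ * t)) (γ * Real.exp (γ * s)) s := by
  have h := (Real.hasDerivAt_exp (γ * s)).comp s ((hasDerivAt_id s).const_mul γ)
  exact h.congr_deriv (by ring)

set_option maxHeartbeats 2000000 in
lemma four_exp_struct (α β c2 c4 ca cb : ℝ) (hα0 : 0 < α) (hα2 : α < 2) (hβ : 4 < β)
    (h2 : 0 < c2) (h4 : 0 < c4) (hca : 0 < ca) (hcb : 0 < cb)
    (G : ℝ → ℝ)
    (hG : ∀ s, G s = c2 * Real.exp (2*s) + c4 * Real.exp (4*s) - ca * Real.exp (α*s)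
      - cb * Real.exp (β*s))
    (hpos : ∃ s, 0 < G s) :
    ∃ z1 z2 : ℝ, z1 < z2 ∧ (∀ s, G s = 0 ↔ s = z1 ∨ s = z2) ∧
      (∀ s, s < z1 → G s < 0) ∧ (∀ s, z1 < s → s < z2 → 0 < G s) ∧
      (∀ s, z2 < s → G s < 0) := by
  set H : ℝ → ℝ := fun s => c2 * Real.exp ((2-α)*s) + c4 * Real.exp ((4-α)*s) - ca
      - cb * Real.exp ((β-α)*s) with hH
  have hGH : ∀ s, G s = Real.exp (α*s) * H s := by
    intro s
    have e1 : Real.exp (α*s) * Real.exp ((2-α)*s) = Real.exp (2*s) := by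
      rw [← Real.exp_add]; ring_nf
    have e2 : Real.exp (α*s) * Real.exp ((4-α)*s) = Real.exp (4*s) := by
      rw [← Real.exp_add]; ring_nf
    have e3 : Real.exp (α*s) * Real.exp ((β-α)*s) = Real.exp (β*s) := by
      rw [← Real.exp_add]; ring_nf
    rw [hG, hH]
    linear_combination (-c2) * e1 - c4 * e2 + cb * e3
  -- χ governs the sign of H'
  set χ : ℝ → ℝ := fun s => (2-α)*c2 * Real.exp (-(2*s)) + (4-α)*c4
      - (β-α)*cb * Real.exp ((β-4)*s) with hχ
  have hHd : ∀ s, HasDerivAt H (Real.exp ((4-α)*s) * χ s) s := by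
    intro s
    have h := ((((exp_hasDerivAt (2-α) s).const_mul c2).add
      ((exp_hasDerivAt (4-α) s).const_mul c4)).sub (hasDerivAt_const s ca)).sub
      ((exp_hasDerivAt (β-α) s).const_mul cb)
    refine h.congr_deriv (Eq.symm ?_)
    have e1 : Real.exp ((4-α)*s) * Real.exp (-(2*s)) = Real.exp ((2-α)*s) := by
      rw [← Real.exp_add]; ring_nf
    have e2 : Real.exp ((4-α)*s) * Real.exp ((β-4)*s) = Real.exp ((β-α)*s) := by
      rw [← Real.exp_add]; ring_nf
    rw [hχ]
    linear_combination ((2-α)*c2) * e1 - ((β-α)*cb) * e2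
  have hχanti : StrictAnti χ := by
    intro x y hxy
    have h1 : Real.exp (-(2*y)) < Real.exp (-(2*x)) := Real.exp_lt_exp.2 (by linarith)
    have h2 : Real.exp ((β-4)*x) < Real.exp ((β-4)*y) := Real.exp_lt_exp.2 (by nlinarith)
    have p1 : (0:ℝ) < (2-α)*c2 := by nlinarith
    have p2 : (0:ℝ) < (β-α)*cb := by nlinarith
    simp only [hχ]
    nlinarith [mul_lt_mul_of_pos_left h1 p1, mul_lt_mul_of_pos_left h2 p2]
  have hχcont : Continuous χ := by
    rw [hχ]; fun_prop
  -- χ is positive somewhere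
  have p1 : (0:ℝ) < (2-α)*c2 := by nlinarith
  have p2 : (0:ℝ) < (β-α)*cb := by nlinarith
  have p4 : (0:ℝ) < (4-α)*c4 := by nlinarith
  obtain ⟨sP, hsP⟩ : ∃ s, 0 < χ s := by
    obtain ⟨s, hs0, hslt⟩ :
        ∃ s : ℝ, s ≤ 0 ∧ s < Real.log ((4-α)*c4 / ((β-α)*cb)) / (β-4) := by
      refine ⟨min 0 (Real.log ((4-α)*c4 / ((β-α)*cb)) / (β-4)) - 1, ?_, ?_⟩
      · linarith [min_le_left (0:ℝ) (Real.log ((4-α)*c4 / ((β-α)*cb)) / (β-4))]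
      · linarith [min_le_right (0:ℝ) (Real.log ((4-α)*c4 / ((β-α)*cb)) / (β-4))]
    refine ⟨s, ?_⟩
    have hβ4 : (0:ℝ) < β - 4 := by linarith
    have hh1 : (1:ℝ) ≤ Real.exp (-(2*s)) := by
      rw [show (1:ℝ) = Real.exp 0 by simp]
      exact Real.exp_le_exp.2 (by linarith)
    have hh2 : (β-α)*cb * Real.exp ((β-4)*s) < (4-α)*c4 := by
      have hlt : (β-4)*s < Real.log ((4-α)*c4 / ((β-α)*cb)) := by
        have := (lt_div_iff₀ hβ4).1 hslt
        linarith
      have hexp := Real.exp_lt_exp.2 hlt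
      rw [Real.exp_log (by positivity)] at hexp
      have hmm := mul_lt_mul_of_pos_left hexp p2
      have heq : (β-α)*cb * ((4-α)*c4 / ((β-α)*cb)) = (4-α)*c4 := by have hba : β - α ≠ 0 := (by linarith : (0:ℝ) < β - α).ne'; field_simp
      linarith
    simp only [hχ]
    nlinarith [mul_le_mul_of_nonneg_left hh1 p1.le, hh2]
  -- χ is negative somewhere
  obtain ⟨sN, hsN⟩ : ∃ s, χ s < 0 := by
    obtain ⟨s, hs0, hsgt⟩ :
        ∃ s : ℝ, 0 ≤ s ∧ Real.log (((2-α)*c2 + (4-α)*c4) / ((β-α)*cb)) / (β-4) < s := by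
      refine ⟨max 0 (Real.log (((2-α)*c2 + (4-α)*c4) / ((β-α)*cb)) / (β-4)) + 1, ?_, ?_⟩
      · linarith [le_max_left (0:ℝ) (Real.log (((2-α)*c2 + (4-α)*c4) / ((β-α)*cb)) / (β-4))]
      · linarith [le_max_right (0:ℝ) (Real.log (((2-α)*c2 + (4-α)*c4) / ((β-α)*cb)) / (β-4))]
    refine ⟨s, ?_⟩
    have hβ4 : (0:ℝ) < β - 4 := by linarith
    have hh1 : Real.exp (-(2*s)) ≤ 1 := by
      rw [show (1:ℝ) = Real.exp 0 by simp]
      exact Real.exp_le_exp.2 (by linarith)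
    have hh2 : (2-α)*c2 + (4-α)*c4 < (β-α)*cb * Real.exp ((β-4)*s) := by
      have hlt : Real.log (((2-α)*c2 + (4-α)*c4) / ((β-α)*cb)) < (β-4)*s := by
        have := (div_lt_iff₀ hβ4).1 hsgt
        linarith
      have hexp := Real.exp_lt_exp.2 hlt
      rw [Real.exp_log (by positivity)] at hexp
      have h3 := mul_lt_mul_of_pos_left hexp p2
      have heq : (β-α)*cb * (((2-α)*c2 + (4-α)*c4) / ((β-α)*cb)) = (2-α)*c2 + (4-α)*c4 := by
        have hba : β - α ≠ 0 := (by linarith : (0:ℝ) < β - α).ne'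
        field_simp
      linarith
    simp only [hχ]
    nlinarith [mul_le_mul_of_nonneg_left hh1 p1.le, hh2]
  have hPN : sP < sN := by
    by_contra h
    push_neg at h
    rcases eq_or_lt_of_le h with h' | h'
    · rw [h'] at hsN; linarith
    · have := hχanti h'; linarith
  -- unique zero u₀ of χ
  obtain ⟨u₀, hu₀mem, hχu₀⟩ : ∃ u₀ ∈ Set.Icc sP sN, χ u₀ = 0 := by
    have := intermediate_value_Icc' hPN.le hχcont.continuousOn (a := sP) (b := sN)
    have h0 : (0:ℝ) ∈ Set.Icc (χ sN) (χ sP) := ⟨hsN.le, hsP.le⟩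
    obtain ⟨u, hu, hu0⟩ := this h0
    exact ⟨u, hu, hu0⟩
  have hχsign : ∀ s, (s < u₀ → 0 < χ s) ∧ (u₀ < s → χ s < 0) := by
    intro s
    constructor
    · intro h; have := hχanti h; rw [hχu₀] at this; linarith
    · intro h; have := hχanti h; rw [hχu₀] at this; linarith
  have hHcont : Continuous H := by
    have : Differentiable ℝ H := fun s => (hHd s).differentiableAt
    exact this.continuous
  have hHderiv : ∀ s, deriv H s = Real.exp ((4-α)*s) * χ s := fun s => (hHd s).deriv
  -- H monotone then antitone
  have hHmono : StrictMonoOn H (Set.Iic u₀) := by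
    apply strictMonoOn_of_deriv_pos (convex_Iic u₀) hHcont.continuousOn
    intro x hx
    rw [interior_Iic] at hx
    rw [hHderiv x]
    exact mul_pos (Real.exp_pos _) ((hχsign x).1 hx)
  have hHanti : StrictAntiOn H (Set.Ici u₀) := by
    apply strictAntiOn_of_deriv_neg (convex_Ici u₀) hHcont.continuousOn
    intro x hx
    rw [interior_Ici] at hx
    rw [hHderiv x]
    exact mul_neg_of_pos_of_neg (Real.exp_pos _) ((hχsign x).2 hx)
  -- H is positive at u₀
  have hHu₀ : 0 < H u₀ := by
    obtain ⟨w, hw⟩ := hpos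
    rw [hGH w] at hw
    have hHw : 0 < H w := by
      by_contra h
      push_neg at h
      nlinarith [Real.exp_pos (α*w)]
    rcases le_total w u₀ with h | h
    · rcases eq_or_lt_of_le h with h' | h'
      · rwa [← h']
      · have := hHmono (Set.mem_Iic.2 h) (Set.mem_Iic.2 le_rfl) h'; linarith
    · rcases eq_or_lt_of_le h with h' | h'
      · rwa [h']
      · have := hHanti (Set.mem_Ici.2 le_rfl) (Set.mem_Ici.2 h) h'; linarith
  -- H negative far left
  obtain ⟨sL, hsLu, hsLneg⟩ : ∃ s, s < u₀ ∧ H s < 0 := by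
    have hα2' : (0:ℝ) < 2 - α := by linarith
    have hα4' : (0:ℝ) < 4 - α := by linarith
    obtain ⟨s, hsu, hsle1, hsle2⟩ :
        ∃ s : ℝ, s < u₀ ∧ s ≤ Real.log (ca/(2*c2)) / (2-α) ∧ s ≤ Real.log (ca/(2*c4)) / (4-α) := by
      refine ⟨min (min (Real.log (ca/(2*c2)) / (2-α)) (Real.log (ca/(2*c4)) / (4-α))) (u₀ - 1),
        ?_, ?_, ?_⟩
      · linarith [min_le_right (min (Real.log (ca/(2*c2)) / (2-α)) (Real.log (ca/(2*c4)) / (4-α))) (u₀-1)]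
      · exact le_trans (min_le_left _ _) (min_le_left _ _)
      · exact le_trans (min_le_left _ _) (min_le_right _ _)
    refine ⟨s, hsu, ?_⟩
    have hh1 : c2 * Real.exp ((2-α)*s) ≤ ca/2 := by
      have h5 : (2-α)*s ≤ Real.log (ca/(2*c2)) := by
        have := (le_div_iff₀ hα2').1 hsle1
        linarith
      have hexp := Real.exp_le_exp.2 h5
      rw [Real.exp_log (by positivity)] at hexp
      have hmm := mul_le_mul_of_nonneg_left hexp h2.le
      have heq : c2 * (ca/(2*c2)) = ca/2 := by field_simp
      linarith
    have hh2 : c4 * Real.exp ((4-α)*s) ≤ ca/2 := by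
      have h5 : (4-α)*s ≤ Real.log (ca/(2*c4)) := by
        have := (le_div_iff₀ hα4').1 hsle2
        linarith
      have hexp := Real.exp_le_exp.2 h5
      rw [Real.exp_log (by positivity)] at hexp
      have hmm := mul_le_mul_of_nonneg_left hexp h4.le
      have heq : c4 * (ca/(2*c4)) = ca/2 := by field_simp
      linarith
    simp only [hH]
    nlinarith [Real.exp_pos ((β-α)*s)]
  -- H negative far right
  obtain ⟨sR, hsRu, hsRneg⟩ : ∃ s, u₀ < s ∧ H s < 0 := by
    have hβ4 : (0:ℝ) < β - 4 := by linarith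
    obtain ⟨s, hsu, hs0, hsgt⟩ :
        ∃ s : ℝ, u₀ < s ∧ 0 ≤ s ∧ Real.log ((c2+c4)/cb)/(β-4) < s := by
      refine ⟨max (max 0 (u₀+1)) (Real.log ((c2+c4)/cb)/(β-4) + 1), ?_, ?_, ?_⟩
      · linarith [le_trans (le_max_right (0:ℝ) (u₀+1))
          (le_max_left (max 0 (u₀+1)) (Real.log ((c2+c4)/cb)/(β-4) + 1))]
      · exact le_trans (le_max_left 0 (u₀+1)) (le_max_left _ _)
      · linarith [le_max_right (max 0 (u₀+1)) (Real.log ((c2+c4)/cb)/(β-4) + 1)]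
    refine ⟨s, hsu, ?_⟩
    have hh1 : Real.exp ((2-α)*s) ≤ Real.exp ((4-α)*s) :=
      Real.exp_le_exp.2 (by nlinarith)
    have hh2 : (c2+c4) * Real.exp ((4-α)*s) < cb * Real.exp ((β-α)*s) := by
      have hlt : Real.log ((c2+c4)/cb) < (β-4)*s := by
        have := (div_lt_iff₀ hβ4).1 hsgt
        linarith
      have hexp := Real.exp_lt_exp.2 hlt
      rw [Real.exp_log (by positivity)] at hexp
      have h3 : (c2+c4) < cb * Real.exp ((β-4)*s) := by
        have heq : cb * ((c2+c4)/cb) = c2+c4 := by field_simp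
        nlinarith [mul_lt_mul_of_pos_left hexp hcb]
      have h4' : Real.exp ((β-α)*s) = Real.exp ((4-α)*s) * Real.exp ((β-4)*s) := by
        rw [← Real.exp_add]; ring_nf
      rw [h4']
      nlinarith [Real.exp_pos ((4-α)*s), Real.exp_pos ((β-4)*s)]
    simp only [hH]
    nlinarith [mul_le_mul_of_nonneg_left hh1 h2.le, hh2]
  -- zeros via IVT
  obtain ⟨z1, hz1mem, hz1⟩ : ∃ z ∈ Set.Icc sL u₀, H z = 0 := by
    have := intermediate_value_Icc hsLu.le hHcont.continuousOn (a := sL) (b := u₀)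
    exact this ⟨hsLneg.le, hHu₀.le⟩
  obtain ⟨z2, hz2mem, hz2⟩ : ∃ z ∈ Set.Icc u₀ sR, H z = 0 := by
    have := intermediate_value_Icc' hsRu.le hHcont.continuousOn (a := u₀) (b := sR)
    exact this ⟨hsRneg.le, hHu₀.le⟩
  have hz1u : z1 < u₀ := by
    rcases eq_or_lt_of_le hz1mem.2 with h | h
    · rw [h] at hz1; linarith
    · exact h
  have hz2u : u₀ < z2 := by
    rcases eq_or_lt_of_le hz2mem.1 with h | h
    · rw [h] at hHu₀; linarith
    · exact h
  have hz12 : z1 < z2 := lt_trans hz1u hz2u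
  -- sign pattern of H
  have hsgn1 : ∀ s, s < z1 → H s < 0 := by
    intro s hs
    have := hHmono (Set.mem_Iic.2 (by linarith : s ≤ u₀)) (Set.mem_Iic.2 hz1u.le) hs
    linarith [this, hz1.symm.le]
  have hsgn2 : ∀ s, z1 < s → s < z2 → 0 < H s := by
    intro s hs1 hs2
    rcases le_total s u₀ with h | h
    · have := hHmono (Set.mem_Iic.2 hz1u.le) (Set.mem_Iic.2 h) hs1
      rw [hz1] at this; linarith
    · have := hHanti (Set.mem_Ici.2 h) (Set.mem_Ici.2 (by linarith : u₀ ≤ z2)) hs2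
      rw [hz2] at this; linarith
  have hsgn3 : ∀ s, z2 < s → H s < 0 := by
    intro s hs
    have := hHanti (Set.mem_Ici.2 hz2u.le) (Set.mem_Ici.2 (by linarith : u₀ ≤ s)) hs
    rw [hz2] at this; linarith
  refine ⟨z1, z2, hz12, ?_, ?_, ?_, ?_⟩
  · intro s
    constructor
    · intro h
      rw [hGH s] at h
      have hH0 : H s = 0 := by
        rcases mul_eq_zero.1 h with h' | h'
        · exact absurd h' (Real.exp_ne_zero _)
        · exact h'
      rcases lt_trichotomy s z1 with h' | h' | h'
      · have := hsgn1 s h'; linarith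
      · exact Or.inl h'
      · rcases lt_trichotomy s z2 with h'' | h'' | h''
        · have := hsgn2 s h' h''; linarith
        · exact Or.inr h''
        · have := hsgn3 s h''; linarith
    · intro h
      rcases h with h | h
      · rw [h, hGH z1, hz1, mul_zero]
      · rw [h, hGH z2, hz2, mul_zero]
  · intro s hs
    rw [hGH s]
    exact mul_neg_of_pos_of_neg (Real.exp_pos _) (hsgn1 s hs)
  · intro s hs1 hs2
    rw [hGH s]
    exact mul_pos (Real.exp_pos _) (hsgn2 s hs1 hs2)
  · intro s hs
    rw [hGH s]
    exact mul_neg_of_pos_of_neg (Real.exp_pos _) (hsgn3 s hs)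

set_option maxHeartbeats 4000000 in
theorem stmt_5 (a b c p q μ Cp Cq : ℝ)
    (ha : 0 < a) (hb : 0 < b) (hc : 0 < c)
    (hq1 : 2 < q) (hq2 : q < 10/3) (hp1 : 14/3 < p) (hp2 : p ≤ 6)
    (hCp : 0 < Cp) (hCq : 0 < Cq)
    (δp δq : ℝ) (hδp : δp = 3 * (p - 2) / (2 * p)) (hδq : δq = 3 * (q - 2) / (2 * q))
    (K : ℝ) (hK : K = 8 * (4 - q * δq) / (p * δp * (p * δp - 2) * (p * δp - q * δq)))
    (Cpq : ℝ) (hCpq : Cpq = K ^ ((4 - q * δq) / (p * δp - 4)) -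
      K ^ ((p * δp - q * δq) / (p * δp - 4)))
    (μstar : ℝ)
    (hμstar : μstar = ((a / 2) * (b * p / (4 * Cp ^ p)) ^ ((2 - q * δq) / (p * δp - 4)) /
        c ^ (q * (1 - δq) + p * (1 - δp) * (2 - q * δq) / (p * δp - 4)) +
      (b / 4) ^ ((p * δp - q * δq) / (p * δp - 4)) *
        (p / Cp ^ p) ^ ((4 - q * δq) / (p * δp - 4)) /
        c ^ (q * (1 - δq) + p * (1 - δp) * (4 - q * δq) / (p * δp - 4))) *
        (q * Cpq / Cq ^ q))
    (μlow : ℝ)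
    (hμlow : μlow = (q * (p * δp - 4) * b / (4 * (p * δp - q * δq) * Cq ^ q)) *
      (p * (4 - q * δq) * b / (4 * (p * δp - q * δq) * Cp ^ p)) ^
        ((4 - q * δq) / (p * δp - 4)) /
      c ^ (q * (1 - δq) + p * (1 - δp) * (4 - q * δq) / (p * δp - 4)))
    (hμ0 : 0 < μ) (hμ : μ < min μlow μstar)
    (A P Q : ℝ) (hA : 0 < A) (hP : 0 < P) (hQ : 0 < Q)
    (hQb : Q ≤ Cq ^ q * c ^ (q * (1 - δq)) * A ^ (q * δq / 2))
    (hPb : P ≤ Cp ^ p * c ^ (p * (1 - δp)) * A ^ (p * δp / 2))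
    (Ψ : ℝ → ℝ)
    (hΨ : ∀ s, Ψ s = a / 2 * Real.exp (2 * s) * A + b / 4 * Real.exp (4 * s) * A ^ 2
      - μ / q * Real.exp (q * δq * s) * Q - 1 / p * Real.exp (p * δp * s) * P) :
    ∃ s₀ t₀ c₀ d₀ : ℝ, s₀ < c₀ ∧ c₀ < t₀ ∧ t₀ < d₀ ∧
      (∀ s, deriv Ψ s = 0 ↔ s = s₀ ∨ s = t₀) ∧
      (∀ s, Ψ s = 0 ↔ s = c₀ ∨ s = d₀) ∧
      Ψ s₀ < 0 ∧ IsLocalMin Ψ s₀ ∧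
      0 < Ψ t₀ ∧ (∀ s, Ψ s ≤ Ψ t₀) ∧
      StrictAntiOn Ψ (Set.Ioi t₀) := by
  have hq0 : 0 < q := by linarith
  have hp0 : 0 < p := by linarith
  have hq0' : q ≠ 0 := ne_of_gt hq0
  have hp0' : p ≠ 0 := ne_of_gt hp0
  have hαval : q * δq = 3*(q-2)/2 := by rw [hδq]; field_simp
  have hβval : p * δp = 3*(p-2)/2 := by rw [hδp]; field_simp
  have hα0 : 0 < q*δq := by rw [hαval]; linarith
  have hα2 : q*δq < 2 := by rw [hαval]; linarith
  have hβ4 : 4 < p*δp := by rw [hβval]; linarith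
  have hδq0 : 0 < δq := by rw [hδq]; exact div_pos (by linarith) (by linarith)
  have hδp0 : 0 < δp := by rw [hδp]; exact div_pos (by linarith) (by linarith)
  have hβα : 0 < p*δp - q*δq := by linarith
  have h4α : 0 < 4 - q*δq := by linarith
  have hβ4d : 0 < p*δp - 4 := by linarith
  have hβ4' : p*δp - 4 ≠ 0 := ne_of_gt hβ4d
  have hCpp : 0 < Cp^p := Real.rpow_pos_of_pos hCp p
  have hCqq : 0 < Cq^q := Real.rpow_pos_of_pos hCq q
  have hμlow' : μ < μlow := lt_of_lt_of_le hμ (min_le_left _ _)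
  -- the two GN constants
  set Ep := Cp^p * c^(p*(1-δp)) with hEpdef
  set Eq := Cq^q * c^(q*(1-δq)) with hEqdef
  have hEp : 0 < Ep := mul_pos hCpp (Real.rpow_pos_of_pos hc _)
  have hEq : 0 < Eq := mul_pos hCqq (Real.rpow_pos_of_pos hc _)
  have hEp' : Ep ≠ 0 := ne_of_gt hEp
  have hEq' : Eq ≠ 0 := ne_of_gt hEq
  -- Step: Ψ is positive somewhere
  obtain ⟨sbar, hsbar⟩ : ∃ s, 0 < Ψ s := by
    set R := p*(4 - q*δq)*b / (4*(p*δp - q*δq)*Ep) with hRdef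
    have hR : 0 < R := div_pos (mul_pos (mul_pos hp0 h4α) hb)
      (mul_pos (mul_pos four_pos hβα) hEp)
    set x := R ^ ((1:ℝ)/(p*δp - 4)) with hxdef
    have hx : 0 < x := Real.rpow_pos_of_pos hR _
    have f1 : x ^ (p*δp - 4) = R := by
      rw [hxdef, ← Real.rpow_mul hR.le, one_div_mul_cancel hβ4', Real.rpow_one]
    have f2 : x ^ (p*δp) = x^(4:ℝ) * R := by
      rw [show p*δp = 4 + (p*δp - 4) by ring, Real.rpow_add hx, f1]
    have f3 : x ^ (4:ℝ) = x^(q*δq) * x^(4 - q*δq) := by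
      rw [← Real.rpow_add hx, show q*δq + (4 - q*δq) = (4:ℝ) by ring]
    have f4 : x ^ (4 - q*δq) = R ^ ((4-q*δq)/(p*δp-4)) := by
      rw [hxdef, ← Real.rpow_mul hR.le, show (1/(p*δp-4))*(4-q*δq) = (4-q*δq)/(p*δp-4) by ring]
    have hβα' : p*δp - q*δq ≠ 0 := ne_of_gt hβα
    have hcoef2 : b/4 - Ep*R/p = b*(p*δp-4)/(4*(p*δp-q*δq)) := by
      rw [hRdef]; field_simp; ring
    have hRR' : R = (p * (4 - q * δq) * b / (4 * (p * δp - q * δq) * Cp ^ p)) *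
        (c^(p*(1-δp)))⁻¹ := by
      rw [hRdef, hEpdef]; field_simp
    have hRe : R ^ ((4-q*δq)/(p*δp-4)) =
        (p * (4 - q * δq) * b / (4 * (p * δp - q * δq) * Cp ^ p)) ^ ((4-q*δq)/(p*δp-4)) *
        (c ^ (p*(1-δp)*((4-q*δq)/(p*δp-4))))⁻¹ := by
      have hR'nn : (0:ℝ) ≤ p * (4 - q * δq) * b / (4 * (p * δp - q * δq) * Cp ^ p) :=
        le_of_lt (div_pos (mul_pos (mul_pos hp0 h4α) hb) (mul_pos (mul_pos four_pos hβα) hCpp))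
      rw [hRR', Real.mul_rpow hR'nn (inv_nonneg.2 (Real.rpow_pos_of_pos hc _).le),
        Real.inv_rpow (Real.rpow_pos_of_pos hc _).le, ← Real.rpow_mul hc.le]
    have hcsplit : c ^ (q * (1 - δq) + p * (1 - δp) * (4 - q * δq) / (p * δp - 4)) =
        c^(q*(1-δq)) * c^(p*(1-δp)*((4-q*δq)/(p*δp-4))) := by
      rw [show q * (1 - δq) + p * (1 - δp) * (4 - q * δq) / (p * δp - 4)
        = q*(1-δq) + p*(1-δp)*((4-q*δq)/(p*δp-4)) by ring, Real.rpow_add hc]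
    have hcu1 : c^(q*(1-δq)) ≠ 0 := ne_of_gt (Real.rpow_pos_of_pos hc _)
    have hcu3 : c^(p*(1-δp)*((4-q*δq)/(p*δp-4))) ≠ 0 := ne_of_gt (Real.rpow_pos_of_pos hc _)
    have key : R ^ ((4-q*δq)/(p*δp-4)) * (b*(p*δp-4)/(4*(p*δp-q*δq))) = μlow * (Eq/q) := by
      rw [hμlow, hcsplit, hRe, hEqdef]
      field_simp
    -- the pointwise inequality at x
    have hT : μ/q*Eq*x^(q*δq) < b/4*x^(4:ℝ) - 1/p*(Ep*x^(p*δp)) := by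
      have E1 : b/4*x^(4:ℝ) - 1/p*(Ep*x^(p*δp)) =
          x^(q*δq)*(x^(4-q*δq)*(b*(p*δp-4)/(4*(p*δp-q*δq)))) := by
        rw [f2, f3]
        linear_combination (x^(q*δq)*x^(4-q*δq)) * hcoef2
      have h1 : μ/q*Eq < x^(4-q*δq)*(b*(p*δp-4)/(4*(p*δp-q*δq))) := by
        rw [f4, key]
        have h2 : μ * (Eq/q) < μlow * (Eq/q) :=
          mul_lt_mul_of_pos_right hμlow' (div_pos hEq hq0)
        have heq : μ/q*Eq = μ*(Eq/q) := by ring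
        linarith
      have h2 := mul_lt_mul_of_pos_right h1 (Real.rpow_pos_of_pos hx (q*δq))
      rw [E1]
      linarith [h2]
    -- choose the point
    set y := x * A ^ ((-(1:ℝ)/2)) with hydef
    have hy : 0 < y := mul_pos hx (Real.rpow_pos_of_pos hA _)
    refine ⟨Real.log y, ?_⟩
    have hexpγ : ∀ γ:ℝ, Real.exp (γ * Real.log y) * A^(γ/2) = x^γ := by
      intro γ
      have e0 : Real.exp (γ * Real.log y) = y ^ γ := by
        rw [Real.rpow_def_of_pos hy, mul_comm]
      rw [e0, hydef, Real.mul_rpow hx.le (Real.rpow_pos_of_pos hA _).le,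
        ← Real.rpow_mul hA.le, mul_assoc, ← Real.rpow_add hA,
        show (-(1:ℝ)/2)*γ + γ/2 = 0 by ring, Real.rpow_zero, mul_one]
    have t1 : Real.exp (2 * Real.log y) * A = x^(2:ℝ) := by
      have := hexpγ 2
      rwa [show (2:ℝ)/2 = (1:ℝ) by norm_num, Real.rpow_one] at this
    have t2 : Real.exp (4 * Real.log y) * A^2 = x^(4:ℝ) := by
      have := hexpγ 4
      rwa [show (4:ℝ)/2 = ((2:ℕ):ℝ) by norm_num, Real.rpow_natCast] at this
    have tq := hexpγ (q*δq)
    have tp := hexpγ (p*δp)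
    have hb1 : Real.exp (q*δq*Real.log y)*Q ≤ Eq * x^(q*δq) := by
      have h1 : Real.exp (q*δq*Real.log y)*Q ≤ Real.exp (q*δq*Real.log y)*(Eq*A^(q*δq/2)) := by
        apply mul_le_mul_of_nonneg_left _ (Real.exp_pos _).le
        rw [hEqdef]
        calc Q ≤ Cq ^ q * c ^ (q * (1 - δq)) * A ^ (q * δq / 2) := hQb
        _ = Cq ^ q * c ^ (q * (1 - δq)) * A ^ (q * δq / 2) := rfl
      have h2 : Real.exp (q*δq*Real.log y)*(Eq*A^(q*δq/2)) = Eq*x^(q*δq) := by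
        rw [← tq]; ring
      linarith
    have hb2 : Real.exp (p*δp*Real.log y)*P ≤ Ep * x^(p*δp) := by
      have h1 : Real.exp (p*δp*Real.log y)*P ≤ Real.exp (p*δp*Real.log y)*(Ep*A^(p*δp/2)) := by
        apply mul_le_mul_of_nonneg_left _ (Real.exp_pos _).le
        rw [hEpdef]
        exact hPb
      have h2 : Real.exp (p*δp*Real.log y)*(Ep*A^(p*δp/2)) = Ep*x^(p*δp) := by
        rw [← tp]; ring
      linarith
    rw [hΨ]
    have e2' : a/2*Real.exp (2*Real.log y)*A = a/2*x^(2:ℝ) := by rw [← t1]; ring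
    have e4' : b/4*Real.exp (4*Real.log y)*A^2 = b/4*x^(4:ℝ) := by rw [← t2]; ring
    have hx2 : 0 < x^(2:ℝ) := Real.rpow_pos_of_pos hx _
    have hmuq : 0 ≤ μ/q := le_of_lt (div_pos hμ0 hq0)
    have hip : 0 ≤ 1/p := le_of_lt (div_pos one_pos hp0)
    have ha2x : 0 < a/2*x^(2:ℝ) := mul_pos (by linarith) hx2
    linarith [mul_le_mul_of_nonneg_left hb1 hmuq, mul_le_mul_of_nonneg_left hb2 hip,
      hT, ha2x, e2', e4']
  -- structure of Ψ itself
  have hGΨ : ∀ s, Ψ s = (a/2*A) * Real.exp (2*s) + (b/4*A^2) * Real.exp (4*s)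
      - (μ/q*Q) * Real.exp (q*δq*s) - (1/p*P) * Real.exp (p*δp*s) := by
    intro s; rw [hΨ s]; ring
  obtain ⟨c₀, d₀, hcd, hΨzero, hΨneg1, hΨpos2, hΨneg3⟩ :=
    four_exp_struct (q*δq) (p*δp) (a/2*A) (b/4*A^2) (μ/q*Q) (1/p*P) hα0 hα2 hβ4
      (by positivity) (by positivity) (by positivity) (by positivity) Ψ hGΨ ⟨sbar, hsbar⟩
  -- the derivative of Ψ
  have hD : ∀ s, HasDerivAt Ψ ((a*A) * Real.exp (2*s) + (b*A^2) * Real.exp (4*s)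
      - (μ*δq*Q) * Real.exp (q*δq*s) - (δp*P) * Real.exp (p*δp*s)) s := by
    intro s
    have hfun : Ψ = fun t => a / 2 * Real.exp (2 * t) * A + b / 4 * Real.exp (4 * t) * A ^ 2
        - μ / q * Real.exp (q * δq * t) * Q - 1 / p * Real.exp (p * δp * t) * P := funext hΨ
    rw [hfun]
    have h := ((((((exp_hasDerivAt 2 s).const_mul (a/2)).mul_const A).add
      (((exp_hasDerivAt 4 s).const_mul (b/4)).mul_const (A^2))).sub
      (((exp_hasDerivAt (q*δq) s).const_mul (μ/q)).mul_const Q)).sub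
      (((exp_hasDerivAt (p*δp) s).const_mul (1/p)).mul_const P))
    refine h.congr_deriv (_root_.Eq.symm ?_)
    field_simp
  have hdiff : Differentiable ℝ Ψ := fun s => (hD s).differentiableAt
  have hcont : Continuous Ψ := hdiff.continuous
  have hDeriv : ∀ s, deriv Ψ s = (a*A) * Real.exp (2*s) + (b*A^2) * Real.exp (4*s)
      - (μ*δq*Q) * Real.exp (q*δq*s) - (δp*P) * Real.exp (p*δp*s) := fun s => (hD s).deriv
  -- Ψ tends to 0 at -∞
  have hterm : ∀ γ:ℝ, 0 < γ → Filter.Tendsto (fun s => Real.exp (γ*s)) Filter.atBot (nhds 0) := by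
    intro γ hγ
    have h1 : Filter.Tendsto (fun s:ℝ => γ*s) Filter.atBot Filter.atBot := by
      apply Filter.tendsto_atBot_atBot.2
      intro bb
      refine ⟨bb/γ, fun aa haa => ?_⟩
      have := (le_div_iff₀ hγ).1 haa
      linarith
    exact Real.tendsto_exp_atBot.comp h1
  have hlim : Filter.Tendsto Ψ Filter.atBot (nhds 0) := by
    have hfun : Ψ = fun t => a / 2 * Real.exp (2 * t) * A + b / 4 * Real.exp (4 * t) * A ^ 2
        - μ / q * Real.exp (q * δq * t) * Q - 1 / p * Real.exp (p * δp * t) * P := funext hΨ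
    rw [hfun]
    have h := ((((hterm 2 two_pos).const_mul (a/2)).mul_const A).add
      (((hterm 4 four_pos).const_mul (b/4)).mul_const (A^2))).sub
      ((((hterm (q*δq) hα0).const_mul (μ/q)).mul_const Q)) |>.sub
      ((((hterm (p*δp) (by linarith)).const_mul (1/p)).mul_const P))
    simpa using h
  -- the derivative is positive somewhere
  have hDpos : ∃ s, 0 < deriv Ψ s := by
    by_contra hcon
    push_neg at hcon
    have hanti : Antitone Ψ := antitone_of_deriv_nonpos hdiff hcon
    have : Ψ sbar ≤ 0 :=
      ge_of_tendsto hlim (Filter.eventually_atBot.2 ⟨sbar, fun t ht => hanti ht⟩)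
    linarith
  -- structure of the derivative
  obtain ⟨s₀, t₀, hst, hDzero, hDneg1, hDpos2, hDneg3⟩ :=
    four_exp_struct (q*δq) (p*δp) (a*A) (b*A^2) (μ*δq*Q) (δp*P) hα0 hα2 hβ4
      (by positivity) (by positivity) (by positivity) (by positivity) (deriv Ψ) hDeriv hDpos
  -- monotonicity pieces
  have hanti1 : StrictAntiOn Ψ (Set.Iic s₀) := by
    apply strictAntiOn_of_deriv_neg (convex_Iic s₀) hcont.continuousOn
    intro x hx
    rw [interior_Iic] at hx
    exact hDneg1 x hx
  have hmono : StrictMonoOn Ψ (Set.Icc s₀ t₀) := by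
    apply strictMonoOn_of_deriv_pos (convex_Icc s₀ t₀) hcont.continuousOn
    intro x hx
    rw [interior_Icc] at hx
    exact hDpos2 x hx.1 hx.2
  have hanti2 : StrictAntiOn Ψ (Set.Ici t₀) := by
    apply strictAntiOn_of_deriv_neg (convex_Ici t₀) hcont.continuousOn
    intro x hx
    rw [interior_Ici] at hx
    exact hDneg3 x hx
  -- Ψ is negative on (-∞, s₀]
  have hΨle0 : ∀ s, s ≤ s₀ → Ψ s ≤ 0 := by
    intro s hs
    refine ge_of_tendsto hlim (Filter.eventually_atBot.2 ⟨s, fun t ht => ?_⟩)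
    rcases eq_or_lt_of_le ht with h | h
    · rw [h]
    · exact (hanti1 (Set.mem_Iic.2 (le_trans ht hs)) (Set.mem_Iic.2 hs) h).le
  have hΨneg : ∀ s, s ≤ s₀ → Ψ s < 0 := by
    intro s hs
    have h1 := hΨle0 (s-1) (by linarith)
    have h2 := hanti1 (Set.mem_Iic.2 (by linarith : s-1 ≤ s₀)) (Set.mem_Iic.2 hs)
      (by linarith : s-1 < s)
    linarith
  have hs0c0 : s₀ < c₀ := by
    by_contra h
    push_neg at h
    have h1 := hΨneg c₀ h
    have h2 := (hΨzero c₀).2 (Or.inl rfl)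
    linarith
  have hΨt₀pos : 0 < Ψ t₀ := by
    have hw : s₀ < sbar := by
      by_contra h
      push_neg at h
      linarith [hΨneg sbar h]
    rcases le_total sbar t₀ with h | h
    · rcases eq_or_lt_of_le h with h' | h'
      · rw [← h']; exact hsbar
      · have := hmono (Set.mem_Icc.2 ⟨hw.le, h⟩)
          (Set.mem_Icc.2 ⟨le_trans hw.le h, le_rfl⟩) h'
        linarith
    · rcases eq_or_lt_of_le h with h' | h'
      · rw [h']; exact hsbar
      · have := hanti2 (Set.mem_Ici.2 le_rfl) (Set.mem_Ici.2 h) h'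
        linarith
  have hct : c₀ < t₀ := by
    rcases lt_trichotomy t₀ c₀ with h | h | h
    · linarith [hΨneg1 t₀ h]
    · rw [← h] at hΨzero
      linarith [(hΨzero t₀).2 (Or.inl rfl)]
    · exact h
  have htd : t₀ < d₀ := by
    rcases lt_trichotomy d₀ t₀ with h | h | h
    · linarith [hΨneg3 t₀ h]
    · rw [h] at hΨzero
      linarith [(hΨzero t₀).2 (Or.inr rfl)]
    · exact h
  have hmax : ∀ s, Ψ s ≤ Ψ t₀ := by
    intro s
    rcases le_total s s₀ with h | h
    · linarith [hΨneg s h]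
    · rcases le_total s t₀ with h' | h'
      · rcases eq_or_lt_of_le h' with h'' | h''
        · rw [h'']
        · exact (hmono (Set.mem_Icc.2 ⟨h, h'⟩)
            (Set.mem_Icc.2 ⟨le_trans h h', le_rfl⟩) h'').le
      · rcases eq_or_lt_of_le h' with h'' | h''
        · rw [← h'']
        · exact (hanti2 (Set.mem_Ici.2 le_rfl) (Set.mem_Ici.2 h') h'').le
  have hlocmin : IsLocalMin Ψ s₀ := by
    have hmem : Set.Iio t₀ ∈ nhds s₀ := Iio_mem_nhds hst
    refine Filter.eventually_of_mem hmem fun s hs => ?_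
    rcases le_total s s₀ with h | h
    · rcases eq_or_lt_of_le h with h' | h'
      · rw [h']
      · exact (hanti1 (Set.mem_Iic.2 h) (Set.mem_Iic.2 le_rfl) h').le
    · rcases eq_or_lt_of_le h with h' | h'
      · rw [← h']
      · exact (hmono (Set.mem_Icc.2 ⟨le_rfl, hst.le⟩)
          (Set.mem_Icc.2 ⟨h, le_of_lt hs⟩) h').le
  have hantiIoi : StrictAntiOn Ψ (Set.Ioi t₀) := fun x hx y hy hxy =>
    hanti2 (Set.mem_Ici.2 (le_of_lt hx)) (Set.mem_Ici.2 (le_of_lt hy)) hxy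
  exact ⟨s₀, t₀, c₀, d₀, hs0c0, hct, htd, hDzero, hΨzero, hΨneg s₀ le_rfl, hlocmin,
    hΨt₀pos, hmax, hantiIoi⟩
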